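/- arXiv:0712.3743 — 2 statements merged into one kernel-verified Lean document; each statement's English description precedes it below -/
import Mathlib

section
/- Let (X, ν) be a measure space. Let p > 1, let q = p/(p−1) be its conjugate exponent, let α ∈ (0, 1), let β := pα/(p+α) (so that β/p + β/α = 1), let ε := β/q, and set p' := 1 + ε > 1. Let g, f, F, J : X → [0, ∞] be measurable, let c, C₂ > 0 be constants, and let μ := g · ν. Assume that f ≤ c · F · J^{−1} holds ν-almost everywhere and that f · g ≤ C₂ · F holds ν-almost everywhere. Then ∫_X f^{p'} dμ ≤ C₂ · c^{β/q} · (∫_X F^p dν)^{1/p + β/(pq)} · (∫_X J^{−α} dν)^{β/(αq)}, where all integrals are Lebesgue integrals with values in [0, ∞]. -/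
open MeasureTheory ENNReal

/-- The measure-theoretic content of Lemma 1 of the paper: with `q = p/(p-1)`,
`β = pα/(p+α)`, `ε = β/q`, `p' = 1+ε`, if `f ≤ c F J⁻¹` ν-a.e. and
`f·g ≤ C₂ F` ν-a.e., then
`∫ f^p' d(g·ν) ≤ C₂ c^(β/q) (∫ F^p dν)^(1/p + β/(pq)) (∫ J^(-α) dν)^(β/(αq))`. -/
theorem stmt_6 {X : Type*} [MeasurableSpace X] (ν : Measure X)
    (p q α β ε p' : ℝ) (hp : 1 < p) (hq : q = p / (p - 1))
    (hα : α ∈ Set.Ioo (0 : ℝ) 1) (hβ : β = p * α / (p + α))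
    (hε : ε = β / q) (hp' : p' = 1 + ε)
    (g f F J : X → ℝ≥0∞) (hg : Measurable g) (hf : Measurable f)
    (hF : Measurable F) (hJ : Measurable J)
    (c C₂ : ℝ) (hc : 0 < c) (hC₂ : 0 < C₂)
    (hfFJ : ∀ᵐ x ∂ν, f x ≤ ENNReal.ofReal c * F x * (J x)⁻¹)
    (hfg : ∀ᵐ x ∂ν, f x * g x ≤ ENNReal.ofReal C₂ * F x) :
    ∫⁻ x, f x ^ p' ∂(ν.withDensity g) ≤
      ENNReal.ofReal C₂ * ENNReal.ofReal c ^ (β / q) *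
        (∫⁻ x, F x ^ p ∂ν) ^ (1 / p + β / (p * q)) *
        (∫⁻ x, J x ^ (-α) ∂ν) ^ (β / (α * q)) := by
  obtain ⟨hα0, hα1⟩ := hα
  have hp0 : (0:ℝ) < p := by linarith
  have hpα : (0:ℝ) < p + α := by linarith
  have hq0 : (0:ℝ) < q := by rw [hq]; exact div_pos hp0 (by linarith)
  have hεval : ε = α * (p - 1) / (p + α) := by
    rw [hε, hβ, hq]; field_simp
  have hε0 : 0 < ε := by
    rw [hεval]; exact div_pos (mul_pos hα0 (by linarith)) hpα
  have hεlt : ε < p - 1 := by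
    rw [hεval, div_lt_iff₀ hpα]; nlinarith
  set r := p / (1 + ε) with hr
  set s := α / ε with hs
  have hrs : r.HolderConjugate s := by
    refine Real.holderConjugate_iff.mpr ⟨?_, ?_⟩
    · rw [hr, lt_div_iff₀ (by linarith)]; linarith
    · rw [hr, hs, hεval]; field_simp; ring
  -- rewrite the withDensity integral
  have hmeas : Measurable fun x => f x ^ p' := hf.pow_const p'
  rw [lintegral_withDensity_eq_lintegral_mul ν hg hmeas]
  -- pointwise bound
  calc ∫⁻ x, (g * fun x => f x ^ p') x ∂ν
      ≤ ∫⁻ x, (ENNReal.ofReal C₂ * ENNReal.ofReal c ^ ε) *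
          (((fun x => F x ^ (1 + ε)) * fun x => (J x)⁻¹ ^ ε) x) ∂ν := by
        refine lintegral_mono_ae ?_
        filter_upwards [hfFJ, hfg] with x h1 h2
        simp only [Pi.mul_apply]
        have key : g x * f x ^ p' = (f x * g x) * f x ^ ε := by
          rw [hp', rpow_add_of_nonneg _ _ zero_le_one hε0.le, rpow_one]; ring
        rw [key]
        calc (f x * g x) * f x ^ ε
            ≤ (ENNReal.ofReal C₂ * F x) * (ENNReal.ofReal c * F x * (J x)⁻¹) ^ ε :=
              mul_le_mul' h2 (rpow_le_rpow h1 hε0.le)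
          _ = ENNReal.ofReal C₂ * ENNReal.ofReal c ^ ε * (F x ^ (1 + ε) * (J x)⁻¹ ^ ε) := by
              rw [mul_rpow_of_nonneg _ _ hε0.le, mul_rpow_of_nonneg _ _ hε0.le,
                rpow_add_of_nonneg _ _ zero_le_one hε0.le, rpow_one]
              ring
    _ = (ENNReal.ofReal C₂ * ENNReal.ofReal c ^ ε) *
          ∫⁻ x, ((fun x => F x ^ (1 + ε)) * fun x => (J x)⁻¹ ^ ε) x ∂ν := by
        rw [lintegral_const_mul]
        exact ((hF.pow_const _).mul ((hJ.inv).pow_const _))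
    _ ≤ (ENNReal.ofReal C₂ * ENNReal.ofReal c ^ ε) *
          ((∫⁻ x, (F x ^ (1 + ε)) ^ r ∂ν) ^ (1 / r) *
            (∫⁻ x, ((J x)⁻¹ ^ ε) ^ s ∂ν) ^ (1 / s)) := by
        gcongr
        exact ENNReal.lintegral_mul_le_Lp_mul_Lq ν hrs
          ((hF.pow_const _).aemeasurable) (((hJ.inv).pow_const _).aemeasurable)
    _ = ENNReal.ofReal C₂ * ENNReal.ofReal c ^ (β / q) *
        (∫⁻ x, F x ^ p ∂ν) ^ (1 / p + β / (p * q)) *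
        (∫⁻ x, J x ^ (-α) ∂ν) ^ (β / (α * q)) := by
        have hεβ : ε = β / q := hε
        have h1 : ∀ x : ℝ≥0∞, (x ^ (1 + ε)) ^ r = x ^ p := by
          intro x
          rw [← rpow_mul]
          congr 1
          rw [hr]
          field_simp
        have h2 : ∀ x : ℝ≥0∞, (x⁻¹ ^ ε) ^ s = x ^ (-α) := by
          intro x
          rw [inv_rpow, ← rpow_neg, ← rpow_mul]
          congr 1
          rw [hs]
          field_simp
        have e1 : 1 / r = 1 / p + β / (p * q) := by
          rw [hr, hε]
          field_simp
        have e2 : 1 / s = β / (α * q) := by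
          rw [hs, one_div_div, hε, div_div, mul_comm q α]
        simp_rw [h1, h2, e1, e2, hεβ]
        ring
end

section
/- Let n ≥ 1 be a natural number, A > 0 and s₀ real numbers, and let g : ℝ → ℝ be a function that is nonnegative and nonincreasing on [s₀, ∞) and satisfies: (i) τⁿ · g(s + τ) ≤ Aⁿ · g(s)² for all s ≥ s₀ and all τ ∈ (0, 1]; (ii) (2A)ⁿ · g(s₀) ≤ 1. Then g(s) = 0 for all s ≥ s₀ + 2. -/
/-- The De Giorgi-type iteration lemma (Kołodziej; [EGZ], [BGZ]): if `g` is
nonnegative and nonincreasing on `[s₀, ∞)`, satisfies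
`τⁿ g(s+τ) ≤ Aⁿ g(s)²` for `s ≥ s₀`, `τ ∈ (0,1]`, and `(2A)ⁿ g(s₀) ≤ 1`, then
`g` vanishes on `[s₀ + 2, ∞)`. -/
theorem stmt_9 (n : ℕ) (hn : 1 ≤ n) (A : ℝ) (hA : 0 < A) (s₀ : ℝ)
    (g : ℝ → ℝ)
    (hnonneg : ∀ s, s₀ ≤ s → 0 ≤ g s)
    (hmono : AntitoneOn g (Set.Ici s₀))
    (hiter : ∀ s, s₀ ≤ s → ∀ τ ∈ Set.Ioc (0 : ℝ) 1,
      τ ^ n * g (s + τ) ≤ A ^ n * (g s) ^ 2)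
    (hinit : (2 * A) ^ n * g s₀ ≤ 1) :
    ∀ s, s₀ + 2 ≤ s → g s = 0 := by
  intro s hs
  have h2A : (0:ℝ) < 2 * A := by linarith
  have h2An : (0:ℝ) < (2 * A) ^ n := pow_pos h2A n
  have hn0 : n ≠ 0 := by omega
  -- Key claim: iteration produces points with geometrically decaying bound.
  have claim : ∀ k : ℕ, ∃ u, s₀ ≤ u ∧ u + 2 * (2⁻¹:ℝ) ^ k ≤ s₀ + 2 ∧
      g u ≤ ((2 * A)⁻¹) ^ n * (((2:ℝ)⁻¹) ^ n) ^ k := by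
    intro k
    induction k with
    | zero =>
      refine ⟨s₀, le_refl _, by norm_num, ?_⟩
      rw [pow_zero, mul_one, inv_pow, ← one_div, le_div_iff₀ h2An, mul_comm]
      exact hinit
    | succ k ih =>
      obtain ⟨u, hu1, hu2, hu3⟩ := ih
      have hhalfk : (0:ℝ) < (2⁻¹:ℝ) ^ k := by positivity
      by_cases hpos : 0 < g u
      · set τ : ℝ := 2 * A * (g u) ^ ((n:ℝ)⁻¹) with hτdef
        have hτpos : 0 < τ := by
          have := Real.rpow_pos_of_pos hpos ((n:ℝ)⁻¹)
          positivity
        have hτn : τ ^ n = (2 * A) ^ n * g u := by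
          rw [hτdef, mul_pow, Real.rpow_inv_natCast_pow hpos.le hn0]
        have hbound : (2 * A) ^ n * g u ≤ ((2⁻¹:ℝ) ^ k) ^ n := by
          have h1 : (2 * A) ^ n * (((2 * A)⁻¹) ^ n * (((2:ℝ)⁻¹) ^ n) ^ k)
              = ((2⁻¹:ℝ) ^ k) ^ n := by
            rw [← mul_assoc, ← mul_pow, mul_inv_cancel₀ h2A.ne', one_pow, one_mul,
              ← pow_mul, ← pow_mul, mul_comm]
          calc (2 * A) ^ n * g u
              ≤ (2 * A) ^ n * (((2 * A)⁻¹) ^ n * (((2:ℝ)⁻¹) ^ n) ^ k) := by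
                exact mul_le_mul_of_nonneg_left hu3 h2An.le
            _ = ((2⁻¹:ℝ) ^ k) ^ n := h1
        have hτle : τ ≤ (2⁻¹:ℝ) ^ k := by
          rw [← pow_le_pow_iff_left₀ hτpos.le hhalfk.le hn0, hτn]
          exact hbound
        have hτ1 : τ ≤ 1 := hτle.trans (by
          apply pow_le_one₀ <;> norm_num)
        have hiter' := hiter u hu1 τ ⟨hτpos, hτ1⟩
        have hgnew : g (u + τ) ≤ (2⁻¹:ℝ) ^ n * g u := by
          have hτnpos : 0 < τ ^ n := pow_pos hτpos n
          have : τ ^ n * g (u + τ) ≤ τ ^ n * ((2⁻¹:ℝ) ^ n * g u) := by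
            calc τ ^ n * g (u + τ) ≤ A ^ n * (g u) ^ 2 := hiter'
              _ = τ ^ n * ((2⁻¹:ℝ) ^ n * g u) := by
                  have hAn : ((2:ℝ) * A) ^ n * (2⁻¹:ℝ) ^ n = A ^ n := by
                    have h : (2:ℝ) * A * 2⁻¹ = A := by ring
                    rw [← mul_pow, h]
                  rw [hτn, ← hAn]; ring
          exact le_of_mul_le_mul_left this hτnpos
        refine ⟨u + τ, by linarith, by
          have : τ + 2 * (2⁻¹:ℝ) ^ (k+1) ≤ 2 * (2⁻¹:ℝ) ^ k := by
            rw [pow_succ]; linarith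
          linarith, ?_⟩
        calc g (u + τ) ≤ (2⁻¹:ℝ) ^ n * g u := hgnew
          _ ≤ (2⁻¹:ℝ) ^ n * (((2 * A)⁻¹) ^ n * (((2:ℝ)⁻¹) ^ n) ^ k) := by
              exact mul_le_mul_of_nonneg_left hu3 (by positivity)
          _ = ((2 * A)⁻¹) ^ n * (((2:ℝ)⁻¹) ^ n) ^ (k+1) := by ring
      · have hgu : g u = 0 := le_antisymm (not_lt.1 hpos) (hnonneg u hu1)
        refine ⟨u, hu1, ?_, by rw [hgu]; positivity⟩
        have : 2 * (2⁻¹:ℝ) ^ (k+1) ≤ 2 * (2⁻¹:ℝ) ^ k := by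
          rw [pow_succ]; linarith
        linarith
  -- conclude
  have hs₀s : s₀ ≤ s := by linarith
  have hgs_le : ∀ k : ℕ, g s ≤ ((2 * A)⁻¹) ^ n * (((2:ℝ)⁻¹) ^ n) ^ k := by
    intro k
    obtain ⟨u, hu1, hu2, hu3⟩ := claim k
    have hus : u ≤ s := by
      have : (0:ℝ) < 2 * (2⁻¹:ℝ) ^ k := by positivity
      linarith
    exact (hmono hu1 hs₀s hus).trans hu3
  have hr : |(2⁻¹:ℝ) ^ n| < 1 := by
    rw [abs_of_nonneg (by positivity)]
    exact pow_lt_one₀ (by norm_num) (by norm_num) hn0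
  have htend : Filter.Tendsto (fun k : ℕ => ((2 * A)⁻¹) ^ n * (((2:ℝ)⁻¹) ^ n) ^ k)
      Filter.atTop (nhds 0) := by
    have := (tendsto_pow_atTop_nhds_zero_of_abs_lt_one hr).const_mul (((2 * A)⁻¹) ^ n)
    simpa using this
  have hle0 : g s ≤ 0 := ge_of_tendsto' htend hgs_le
  exact le_antisymm hle0 (hnonneg s hs₀s)
end
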